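/- Regular graphs are recognizable: if G and H are reconstructions of each other with at least three vertices and G is k-regular, then H is k-regular. -/

import Mathlib

open SimpleGraph

def IsReconstruction {V W : Type*} (G : SimpleGraph V) (H : SimpleGraph W) : Prop :=
  ∃ f : V ≃ W, ∀ v : V,
    Nonempty ((G.induce {w | w ≠ v}) ≃g (H.induce {w | w ≠ f v}))

open Finset

lemma aux_degree_induce {V : Type*} [Fintype V] (G : SimpleGraph V) [DecidableRel G.Adj]
    (v : V) (w : {w | w ≠ v}) [Fintype ↥{w | w ≠ v}] :
    (G.induce {w | w ≠ v}).degree w + (if G.Adj ↑w v then 1 else 0) = G.degree ↑w := by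
  classical
  have h1 : ((G.induce {w | w ≠ v}).neighborFinset w).map (Function.Embedding.subtype _)
      = (G.neighborFinset ↑w).erase v := by
    ext u
    simp only [mem_map, mem_neighborFinset, mem_erase, Function.Embedding.coe_subtype]
    constructor
    · rintro ⟨⟨u, hu⟩, hadj, rfl⟩
      exact ⟨hu, hadj⟩
    · rintro ⟨hu, hadj⟩
      exact ⟨⟨u, hu⟩, hadj, rfl⟩
  have h2 := congrArg Finset.card h1
  rw [card_map] at h2
  rw [degree, degree, h2]
  rcases Classical.em (G.Adj ↑w v) with h | h
  · rw [if_pos h, card_erase_of_mem (by simpa [mem_neighborFinset] using h)]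
    have : 0 < #(G.neighborFinset ↑w) := card_pos.mpr ⟨v, by simpa [mem_neighborFinset] using h⟩
    omega
  · rw [if_neg h, erase_eq_of_notMem (by simpa [mem_neighborFinset] using h)]
    omega

lemma aux_edge_split {V : Type*} [Fintype V] (G : SimpleGraph V) [DecidableRel G.Adj]
    (v : V) :
    G.edgeFinset.card = Nat.card (G.induce {w | w ≠ v}).edgeSet + G.degree v := by
  classical
  haveI : Fintype ↥{w | w ≠ v} := Fintype.ofFinite _
  have key : 2 * #G.edgeFinset
      = 2 * Nat.card (G.induce {w | w ≠ v}).edgeSet + 2 * G.degree v := by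
    rw [← sum_degrees_eq_twice_card_edges]
    have := sum_degrees_eq_twice_card_edges (G.induce {w | w ≠ v})
    rw [edgeFinset_card, ← Nat.card_eq_fintype_card] at this
    rw [← this]
    have hsplit : ∑ u, G.degree u = ∑ u ∈ univ.erase v, G.degree u + G.degree v := by
      rw [Finset.sum_erase_add]
      exact mem_univ v
    rw [hsplit]
    have hsub : ∑ u ∈ univ.erase v, G.degree u
        = ∑ w : {w | w ≠ v}, G.degree ↑w := by
      apply Finset.sum_subtype
      intro u
      simp [Set.mem_setOf_eq]
    rw [hsub]
    have hdeg : ∑ w : {w | w ≠ v}, G.degree ↑w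
        = ∑ w : {w | w ≠ v}, ((G.induce {w | w ≠ v}).degree w
            + (if G.Adj ↑w v then 1 else 0)) := by
      apply Finset.sum_congr rfl
      intro w _
      exact (aux_degree_induce G v w).symm
    rw [hdeg, Finset.sum_add_distrib]
    have hite : ∑ w : {w | w ≠ v}, (if G.Adj ↑w v then 1 else 0) = G.degree v := by
      have hsub2 : ∑ u ∈ univ.erase v, (if G.Adj u v then 1 else 0)
          = ∑ w : {w | w ≠ v}, (if G.Adj ↑w v then 1 else 0) := by
        apply Finset.sum_subtype
        intro u
        simp [Set.mem_setOf_eq]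
      rw [← hsub2, ← Finset.card_filter]
      rw [degree]
      congr 1
      ext u
      simp only [mem_filter, mem_erase, mem_univ, true_and, and_true, mem_neighborFinset]
      constructor
      · rintro ⟨-, h⟩; exact h.symm
      · intro h; exact ⟨h.ne', h.symm⟩
    rw [hite]
    ring
  omega

/-- Regular graphs are recognizable. -/
theorem stmt_16 {V W : Type*} [Fintype V] [Fintype W]
    (G : SimpleGraph V) (H : SimpleGraph W)
    [DecidableRel G.Adj] [DecidableRel H.Adj]
    (hrec : IsReconstruction G H) (hcard : 3 ≤ Fintype.card V)
    {k : ℕ} (hreg : G.IsRegularOfDegree k) :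
    H.IsRegularOfDegree k := by
  classical
  obtain ⟨f, hf⟩ := hrec
  have hcards : ∀ v : V, Nat.card (G.induce {w | w ≠ v}).edgeSet
      = Nat.card (H.induce {w | w ≠ f v}).edgeSet := fun v =>
    Nat.card_congr (hf v).some.mapEdgeSet
  have hGsplit : ∀ v : V,
      G.edgeFinset.card = Nat.card (G.induce {w | w ≠ v}).edgeSet + G.degree v :=
    fun v => aux_edge_split G v
  have hHsplit : ∀ w : W,
      H.edgeFinset.card = Nat.card (H.induce {w' | w' ≠ w}).edgeSet + H.degree w :=
    fun w => aux_edge_split H w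
  set n := Fintype.card V with hn
  have hnW : Fintype.card W = n := (Fintype.card_congr f).symm
  have hGsum : ∑ v : V, Nat.card (G.induce {w | w ≠ v}).edgeSet + 2 * #G.edgeFinset
      = n * #G.edgeFinset := by
    have h : ∑ v : V, (Nat.card (G.induce {w | w ≠ v}).edgeSet + G.degree v)
        = ∑ v : V, #G.edgeFinset :=
      Finset.sum_congr rfl fun v _ => (hGsplit v).symm
    rw [Finset.sum_add_distrib, sum_degrees_eq_twice_card_edges] at h
    rw [h, Finset.sum_const, smul_eq_mul, Finset.card_univ]
  have hHsum : ∑ w : W, Nat.card (H.induce {w' | w' ≠ w}).edgeSet + 2 * #H.edgeFinset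
      = n * #H.edgeFinset := by
    have h : ∑ w : W, (Nat.card (H.induce {w' | w' ≠ w}).edgeSet + H.degree w)
        = ∑ w : W, #H.edgeFinset :=
      Finset.sum_congr rfl fun w _ => (hHsplit w).symm
    rw [Finset.sum_add_distrib, sum_degrees_eq_twice_card_edges] at h
    rw [h, Finset.sum_const, smul_eq_mul, Finset.card_univ, hnW]
  have hsums : ∑ v : V, Nat.card (G.induce {w | w ≠ v}).edgeSet
      = ∑ w : W, Nat.card (H.induce {w' | w' ≠ w}).edgeSet := by
    rw [show ∑ v : V, Nat.card (G.induce {w | w ≠ v}).edgeSet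
        = ∑ v : V, Nat.card (H.induce {w' | w' ≠ f v}).edgeSet from
      Finset.sum_congr rfl fun v _ => hcards v]
    exact Fintype.sum_equiv f _ _ (fun v => rfl)
  have hedges : #G.edgeFinset = #H.edgeFinset := by
    nlinarith [hGsum, hHsum, hsums, hcard]
  intro w
  obtain ⟨v, rfl⟩ := f.surjective w
  have h1 := hGsplit v
  have h2 := hHsplit (f v)
  rw [hreg v] at h1
  rw [hcards v] at h1
  omega
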